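/- Let P, Q be matroids on the same ground set, D = P ∩ Q, and let S, T ∈ D with |S| = |T| = g. Then there exist orderings s₁,…,s_g of S and t₁,…,t_g of T such that for every i = 1,…,g the set S − s₁ + t₁ − s₂ + t₂ − ⋯ + t_{i−1} − s_i belongs to D. -/

import Mathlib

open Finset

variable {V : Type*} [Fintype V] [DecidableEq V]

/-- A matroid, given by its collection of independent sets (as a predicate on finsets). -/
def IsMatroid (Indep : Finset V → Prop) : Prop :=
  Indep ∅ ∧ (∀ ⦃I J : Finset V⦄, Indep J → I ⊆ J → Indep I) ∧
    ∀ ⦃I J : Finset V⦄, Indep I → Indep J → I.card < J.card →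
      ∃ x ∈ J, x ∉ I ∧ Indep (insert x I)

/-- Looplessness: every singleton is independent. -/
def Loopless (Indep : Finset V → Prop) : Prop := ∀ v : V, Indep {v}

open scoped Classical in
/-- The rank of a set `S`: maximal size of an independent subset of `S`. -/
noncomputable def rnk (Indep : Finset V → Prop) (S : Finset V) : ℕ :=
  (S.powerset.filter (fun e => Indep e)).sup Finset.card

/-- `ζ(M) = max over nonempty S of |S| / rank(S)`. -/
noncomputable def zeta (Indep : Finset V → Prop) : ℝ :=
  sSup {x : ℝ | ∃ S : Finset V, S.Nonempty ∧ x = (S.card : ℝ) / (rnk Indep S : ℝ)}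

/-- The edge covering number: minimal number of edges of the complex covering `V`. -/
noncomputable def beta (Indep : Finset V → Prop) : ℕ :=
  sInf {k : ℕ | ∃ F : Finset (Finset V), (∀ e ∈ F, Indep e) ∧
    (∀ v : V, ∃ e ∈ F, v ∈ e) ∧ F.card = k}

/-- The fractional edge covering number. -/
noncomputable def betaStar (D : Finset V → Prop) : ℝ :=
  sInf {x : ℝ | ∃ f : Finset V → ℝ, (∀ e, 0 ≤ f e) ∧ (∀ e, f e ≠ 0 → D e) ∧
    (∀ v : V, 1 ≤ ∑ e : Finset V, if v ∈ e then f e else 0) ∧ x = ∑ e : Finset V, f e}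


lemma lemB {Q : Finset V → Prop} (hQ : IsMatroid Q) {X W : Finset V} {t : V}
    (hX : Q X) (ht : t ∉ X) (hdep : ¬ Q (insert t X)) (hW : W ⊆ insert t X)
    (htW : t ∈ W) (hQW : Q W) :
    ∃ s ∈ X, s ∉ W ∧ Q (insert t (X.erase s)) := by
  classical
  set F := (insert t X).powerset.filter (fun Z => W ⊆ Z ∧ Q Z) with hF
  have hWF : W ∈ F := by
    simp [hF, Finset.mem_filter, Finset.mem_powerset, hW, hQW]
  obtain ⟨Z, hZF, hZmax⟩ := F.exists_max_image Finset.card ⟨W, hWF⟩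
  simp only [hF, Finset.mem_filter, Finset.mem_powerset] at hZF
  obtain ⟨hZsub, hWZ, hQZ⟩ := hZF
  have hXle : X.card ≤ Z.card := by
    by_contra h
    push_neg at h
    obtain ⟨x, hxX, hxZ, hQx⟩ := hQ.2.2 hQZ hX h
    have hmem : insert x Z ∈ F := by
      refine Finset.mem_filter.2 ⟨Finset.mem_powerset.2 ?_, hWZ.trans (Finset.subset_insert _ _), hQx⟩
      exact Finset.insert_subset (Finset.mem_insert_of_mem hxX) hZsub
    have := hZmax _ hmem
    rw [Finset.card_insert_of_notMem hxZ] at this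
    omega
  have hne : Z ≠ insert t X := fun h => hdep (h ▸ hQZ)
  have hZlt : Z.card < (insert t X).card := Finset.card_lt_card (lt_of_le_of_ne hZsub hne)
  rw [Finset.card_insert_of_notMem ht] at hZlt
  have hZcard : Z.card = X.card := by omega
  obtain ⟨s, hsmem, hsZ⟩ := Finset.exists_of_ssubset (lt_of_le_of_ne hZsub hne)
  have hst : s ≠ t := fun h => hsZ (h ▸ hWZ htW)
  have hsX : s ∈ X := (Finset.mem_insert.1 hsmem).resolve_left hst
  have hsW : s ∉ W := fun h => hsZ (hWZ h)
  have hteq : Z = insert t (X.erase s) := by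
    apply Finset.eq_of_subset_of_card_le
    · intro z hz
      rcases Finset.mem_insert.1 (hZsub hz) with h | h
      · exact Finset.mem_insert.2 (Or.inl h)
      · exact Finset.mem_insert.2 (Or.inr (Finset.mem_erase.2 ⟨fun he => hsZ (he ▸ hz), h⟩))
    · rw [Finset.card_insert_of_notMem (fun h => ht (Finset.erase_subset _ _ h)),
        Finset.card_erase_of_mem hsX, hZcard]
      have : 0 < X.card := Finset.card_pos.2 ⟨s, hsX⟩
      omega
  exact ⟨s, hsX, hsW, hteq ▸ hQZ⟩

lemma stepLem {P Q : Finset V → Prop} (hP : IsMatroid P) (hQ : IsMatroid Q)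
    {T W R : Finset V} (hT : P T ∧ Q T) (hWT : W ⊆ T) (hdisj : Disjoint W R)
    (hR : R.Nonempty) (hC : P (W ∪ R) ∧ Q (W ∪ R)) (hcard : (W ∪ R).card < T.card) :
    ∃ t ∈ T, t ∉ W ∪ R ∧ ∃ s ∈ R,
      P (insert t ((W ∪ R).erase s)) ∧ Q (insert t ((W ∪ R).erase s)) := by
  classical
  obtain ⟨t, htT, htC, hPt⟩ := hP.2.2 hC.1 hT.1 hcard
  refine ⟨t, htT, htC, ?_⟩
  by_cases hq : Q (insert t (W ∪ R))
  · obtain ⟨s, hsR⟩ := hR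
    refine ⟨s, hsR, ?_, ?_⟩
    · exact hP.2.1 hPt (by
        intro x hx
        rcases Finset.mem_insert.1 hx with h | h
        · exact Finset.mem_insert.2 (Or.inl h)
        · exact Finset.mem_insert.2 (Or.inr (Finset.erase_subset _ _ h)))
    · exact hQ.2.1 hq (by
        intro x hx
        rcases Finset.mem_insert.1 hx with h | h
        · exact Finset.mem_insert.2 (Or.inl h)
        · exact Finset.mem_insert.2 (Or.inr (Finset.erase_subset _ _ h)))
  · have hWtsub : insert t W ⊆ insert t (W ∪ R) :=
      Finset.insert_subset_insert _ (Finset.subset_union_left)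
    have hQWt : Q (insert t W) := hQ.2.1 hT.2 (Finset.insert_subset htT hWT)
    obtain ⟨s, hsC, hsW, hQs⟩ := lemB hQ hC.2 htC hq hWtsub (Finset.mem_insert_self _ _) hQWt
    have hsR : s ∈ R := by
      rcases Finset.mem_union.1 hsC with h | h
      · exact (hsW (Finset.mem_insert_of_mem h)).elim
      · exact h
    refine ⟨s, hsR, ?_, hQs⟩
    exact hP.2.1 hPt (by
      intro x hx
      rcases Finset.mem_insert.1 hx with h | h
      · exact Finset.mem_insert.2 (Or.inl h)
      · exact Finset.mem_insert.2 (Or.inr (Finset.erase_subset _ _ h)))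

lemma chainLem {P Q : Finset V → Prop} (hP : IsMatroid P) (hQ : IsMatroid Q)
    {T : Finset V} (hT : P T ∧ Q T) :
    ∀ n (W R : Finset V), W ⊆ T → Disjoint W R → R.card = n →
      (W ∪ R).card + 1 = T.card → P (W ∪ R) → Q (W ∪ R) →
      ∃ ts ss : List V, ts.Nodup ∧ ss.Nodup ∧ ts.length = n ∧ ss.length = n ∧
        ts.toFinset ⊆ T ∧ (∀ x ∈ ts, x ∉ W) ∧ ss.toFinset = R ∧
        ∀ k ≤ n, P (W ∪ (ts.take k).toFinset ∪ (R \ (ss.take k).toFinset)) ∧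
                 Q (W ∪ (ts.take k).toFinset ∪ (R \ (ss.take k).toFinset)) := by
  classical
  intro n
  induction n with
  | zero =>
    intro W R hWT hdisj hRcard hcard hPC hQC
    refine ⟨[], [], by simp, by simp, rfl, rfl, by simp, by simp, by
      simp [Finset.card_eq_zero.1 hRcard], ?_⟩
    intro k hk
    interval_cases k
    have hR0 : R = ∅ := Finset.card_eq_zero.1 hRcard
    subst hR0
    exact ⟨by simpa using hPC, by simpa using hQC⟩
  | succ n ih =>
    intro W R hWT hdisj hRcard hcard hPC hQC
    have hRne : R.Nonempty := Finset.card_pos.1 (by omega)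
    obtain ⟨t, htT, htC, s, hsR, hPs, hQs⟩ := stepLem hP hQ hT hWT hdisj hRne ⟨hPC, hQC⟩ (by omega)
    have hsW : s ∉ W := Finset.disjoint_right.1 hdisj hsR
    have htW : t ∉ W := fun h => htC (Finset.mem_union.2 (Or.inl h))
    have htR : t ∉ R := fun h => htC (Finset.mem_union.2 (Or.inr h))
    -- the new configuration
    have hkey : insert t ((W ∪ R).erase s) = (insert t W) ∪ (R.erase s) := by
      ext x
      simp only [Finset.mem_insert, Finset.mem_erase, Finset.mem_union]
      constructor
      · rintro (rfl | ⟨hxs, h | h⟩)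
        · exact Or.inl (Or.inl rfl)
        · exact Or.inl (Or.inr h)
        · exact Or.inr ⟨hxs, h⟩
      · rintro ((rfl | h) | ⟨hxs, h⟩)
        · exact Or.inl rfl
        · refine Or.inr ⟨fun he => hsW (he ▸ h), Or.inl h⟩
        · exact Or.inr ⟨hxs, Or.inr h⟩
    rw [hkey] at hPs hQs
    have hdisj' : Disjoint (insert t W) (R.erase s) := by
      rw [Finset.disjoint_left]
      intro x hx hxR
      rcases Finset.mem_insert.1 hx with rfl | h
      · exact htR (Finset.erase_subset _ _ hxR)
      · exact Finset.disjoint_left.1 hdisj h (Finset.erase_subset _ _ hxR)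
    have hcard' : ((insert t W) ∪ (R.erase s)).card + 1 = T.card := by
      rw [← hkey, Finset.card_insert_of_notMem (fun h => htC (Finset.erase_subset _ _ h)),
        Finset.card_erase_of_mem (Finset.mem_union.2 (Or.inr hsR))]
      have : 0 < (W ∪ R).card := Finset.card_pos.2 ⟨s, Finset.mem_union.2 (Or.inr hsR)⟩
      omega
    obtain ⟨ts', ss', hnd1, hnd2, hl1, hl2, hsubT, hnotW, hssR, hvalley⟩ :=
      ih (insert t W) (R.erase s) (Finset.insert_subset htT hWT) hdisj'
        (by rw [Finset.card_erase_of_mem hsR]; omega) hcard' hPs hQs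
    refine ⟨t :: ts', s :: ss', ?_, ?_, by simp [hl1], by simp [hl2], ?_, ?_, ?_, ?_⟩
    · exact List.nodup_cons.2 ⟨fun h => (hnotW t h) (Finset.mem_insert_self _ _), hnd1⟩
    · refine List.nodup_cons.2 ⟨fun h => ?_, hnd2⟩
      have : s ∈ ss'.toFinset := List.mem_toFinset.2 h
      rw [hssR] at this
      exact (Finset.mem_erase.1 this).1 rfl
    · intro x hx
      rcases List.mem_cons.1 (List.mem_toFinset.1 hx) with rfl | h
      · exact htT
      · exact hsubT (List.mem_toFinset.2 h)
    · intro x hx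
      rcases List.mem_cons.1 hx with rfl | h
      · exact htW
      · exact fun hw => hnotW x h (Finset.mem_insert_of_mem hw)
    · simp only [List.toFinset_cons, hssR]
      exact Finset.insert_erase hsR
    · intro k hk
      cases k with
      | zero => simpa using ⟨hPC, hQC⟩
      | succ k =>
        have hk' : k ≤ n := by omega
        have := hvalley k hk'
        have heq : W ∪ ((t :: ts').take (k+1)).toFinset ∪ (R \ ((s :: ss').take (k+1)).toFinset)
            = (insert t W) ∪ (ts'.take k).toFinset ∪ ((R.erase s) \ (ss'.take k).toFinset) := by
          simp only [List.take_succ_cons, List.toFinset_cons]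
          ext x
          simp only [Finset.mem_union, Finset.mem_insert, Finset.mem_sdiff, Finset.mem_erase]
          constructor
          · rintro ((h | (rfl | h)) | ⟨hxR, hx⟩)
            · exact Or.inl (Or.inl (Or.inr h))
            · exact Or.inl (Or.inl (Or.inl rfl))
            · exact Or.inl (Or.inr h)
            · push_neg at hx
              exact Or.inr ⟨⟨hx.1, hxR⟩, hx.2⟩
          · rintro (((rfl | h) | h) | ⟨⟨hxs, hxR⟩, hx⟩)
            · exact Or.inl (Or.inr (Or.inl rfl))
            · exact Or.inl (Or.inl h)
            · exact Or.inl (Or.inr (Or.inr h))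
            · exact Or.inr ⟨hxR, by push_neg; exact ⟨hxs, hx⟩⟩
        rw [heq]
        exact this

lemma dropLem (l : List V) (h : l.Nodup) (k : ℕ) :
    l.toFinset \ (l.take k).toFinset = (l.drop k).toFinset := by
  ext x
  simp only [Finset.mem_sdiff, List.mem_toFinset]
  constructor
  · rintro ⟨hx, hnx⟩
    rcases List.mem_append.1 ((List.take_append_drop k l) ▸ hx) with h' | h'
    · exact absurd h' hnx
    · exact h'
  · intro hx
    refine ⟨(List.take_append_drop k l) ▸ List.mem_append.2 (Or.inr hx), ?_⟩
    exact fun hc => (List.disjoint_take_drop h le_rfl) hc hx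

lemma imageTake {g : ℕ} (l : List V) (hlen : l.length = g) (m : ℕ) :
    Finset.image (fun i : Fin g => l.get (Fin.cast hlen.symm i))
      (Finset.univ.filter (fun j : Fin g => (j : ℕ) < m)) = (l.take m).toFinset := by
  ext a
  simp only [Finset.mem_image, Finset.mem_filter, Finset.mem_univ, true_and,
    List.mem_toFinset, List.mem_take_iff_getElem]
  constructor
  · rintro ⟨j, hj, rfl⟩
    exact ⟨(j : ℕ), by simp [lt_min_iff, hj, hlen, (Fin.cast hlen.symm j).isLt], by simp [List.get_eq_getElem]⟩
  · rintro ⟨i, hi, rfl⟩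
    have hil : i < l.length := lt_of_lt_of_le hi (min_le_right _ _)
    have him : i < m := lt_of_lt_of_le hi (min_le_left _ _)
    exact ⟨⟨i, hlen ▸ hil⟩, him, by simp [List.get_eq_getElem]⟩

lemma imageUniv {g : ℕ} (l : List V) (hlen : l.length = g) :
    Finset.image (fun i : Fin g => l.get (Fin.cast hlen.symm i)) Finset.univ = l.toFinset := by
  ext a
  simp only [Finset.mem_image, Finset.mem_univ, true_and, List.mem_toFinset, List.mem_iff_get]
  constructor
  · rintro ⟨j, rfl⟩; exact ⟨_, rfl⟩
  · rintro ⟨n, rfl⟩; exact ⟨Fin.cast hlen n, rfl⟩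

lemma injGet {g : ℕ} (l : List V) (hlen : l.length = g) (h : l.Nodup) :
    Function.Injective (fun i : Fin g => l.get (Fin.cast hlen.symm i)) := by
  intro a b hab
  have := List.nodup_iff_injective_get.1 h hab
  exact Fin.cast_injective _ this

/-- Exchange sequences in the intersection of two matroids: for `S, T ∈ D = P ∩ Q` of the
same size `g` there are orderings `s₁,…,s_g` of `S` and `t₁,…,t_g` of `T` such that
`S - s₁ + t₁ - s₂ + ⋯ + t_{i-1} - s_i ∈ D` for all `i`. -/
theorem stmt4 (P Q : Finset V → Prop) (hP : IsMatroid P) (hQ : IsMatroid Q)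
    (S T : Finset V) (g : ℕ)
    (hS : P S ∧ Q S) (hT : P T ∧ Q T) (hSg : S.card = g) (hTg : T.card = g) :
    ∃ s t : Fin g → V, Function.Injective s ∧ Function.Injective t ∧
      Finset.image s Finset.univ = S ∧ Finset.image t Finset.univ = T ∧
      ∀ i : Fin g,
        P ((S \ Finset.image s (Finset.univ.filter (fun j => j ≤ i))) ∪
            Finset.image t (Finset.univ.filter (fun j => j < i))) ∧
        Q ((S \ Finset.image s (Finset.univ.filter (fun j => j ≤ i))) ∪
            Finset.image t (Finset.univ.filter (fun j => j < i))) := by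
  classical
  rcases g with _ | n
  · refine ⟨Fin.elim0, Fin.elim0, fun i => i.elim0, fun i => i.elim0, ?_, ?_, fun i => i.elim0⟩
    · simp [Finset.card_eq_zero.1 hSg]
    · simp [Finset.card_eq_zero.1 hTg]
  · -- g = n + 1
    obtain ⟨s₁, hs₁⟩ : S.Nonempty := Finset.card_pos.1 (by omega)
    set R := S.erase s₁ with hR
    have hRcard : R.card = n := by rw [hR, Finset.card_erase_of_mem hs₁, hSg]; omega
    have hRsub : R ⊆ S := Finset.erase_subset _ _
    obtain ⟨ts, ss, hnd1, hnd2, hl1, hl2, hsubT, _, hssR, hvalley⟩ :=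
      chainLem hP hQ hT n ∅ R (Finset.empty_subset T) (Finset.disjoint_left.2 (by simp))
        hRcard (by rw [Finset.empty_union, hRcard, hTg]) 
        (by rw [Finset.empty_union]; exact hP.2.1 hS.1 hRsub)
        (by rw [Finset.empty_union]; exact hQ.2.1 hS.2 hRsub)
    have htsT : ts.toFinset.card = n := by
      rw [List.toFinset_card_of_nodup hnd1, hl1]
    obtain ⟨tg, htg⟩ : (T \ ts.toFinset).Nonempty := by
      rw [← Finset.card_pos, Finset.card_sdiff_of_subset hsubT, htsT, hTg]; omega
    have htgT : tg ∈ T := (Finset.mem_sdiff.1 htg).1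
    have htgts : tg ∉ ts := fun h => (Finset.mem_sdiff.1 htg).2 (List.mem_toFinset.2 h)
    set LS : List V := s₁ :: ss with hLS
    set LT : List V := ts ++ [tg] with hLT
    have hLSlen : LS.length = n + 1 := by simp [hLS, hl2]
    have hLTlen : LT.length = n + 1 := by simp [hLT, hl1]
    have hLSnd : LS.Nodup := by
      refine List.nodup_cons.2 ⟨fun h => ?_, hnd2⟩
      have : s₁ ∈ ss.toFinset := List.mem_toFinset.2 h
      rw [hssR, hR] at this
      exact (Finset.mem_erase.1 this).1 rfl
    have hLTnd : LT.Nodup := by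
      rw [hLT, List.nodup_append]
      refine ⟨hnd1, List.nodup_singleton tg, ?_⟩
      intro a ha b hb
      simp only [List.mem_singleton] at hb
      subst hb
      exact fun h => htgts (h ▸ ha)
    have hLSfin : LS.toFinset = S := by
      simp only [hLS, List.toFinset_cons, hssR, hR]
      exact Finset.insert_erase hs₁
    have hLTfin : LT.toFinset = T := by
      apply Finset.eq_of_subset_of_card_le
      · intro x hx
        simp only [hLT, List.toFinset_append, List.toFinset_cons, List.toFinset_nil,
          Finset.mem_union] at hx
        rcases hx with h | h
        · exact hsubT h
        · simp at h; exact h ▸ htgT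
      · have : LT.toFinset.card = n + 1 := by
          rw [List.toFinset_card_of_nodup hLTnd, hLTlen]
        rw [this, hTg]
    refine ⟨fun i => LS.get (Fin.cast hLSlen.symm i), fun i => LT.get (Fin.cast hLTlen.symm i),
      injGet LS hLSlen hLSnd, injGet LT hLTlen hLTnd,
      (imageUniv LS hLSlen).trans hLSfin, (imageUniv LT hLTlen).trans hLTfin, ?_⟩
    intro i
    have hfil1 : (Finset.univ.filter (fun j : Fin (n+1) => j ≤ i))
        = Finset.univ.filter (fun j : Fin (n+1) => (j : ℕ) < (i : ℕ) + 1) := by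
      ext j
      simp only [Finset.mem_filter, Finset.mem_univ, true_and, Fin.le_def]
      omega
    have hfil2 : (Finset.univ.filter (fun j : Fin (n+1) => j < i))
        = Finset.univ.filter (fun j : Fin (n+1) => (j : ℕ) < (i : ℕ)) := by
      ext j
      simp only [Finset.mem_filter, Finset.mem_univ, true_and, Fin.lt_def]
    rw [hfil1, hfil2, imageTake LS hLSlen ((i : ℕ) + 1), imageTake LT hLTlen (i : ℕ),
      ← hLSfin, dropLem LS hLSnd ((i : ℕ) + 1)]
    have hiLe : (i : ℕ) ≤ n := by omega
    have hdropeq : LS.drop ((i : ℕ) + 1) = ss.drop (i : ℕ) := by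
      simp [hLS]
    have htakeeq : LT.take (i : ℕ) = ts.take (i : ℕ) := by
      rw [hLT, List.take_append, hl1, Nat.sub_eq_zero_of_le hiLe]
      simp
    rw [hdropeq, htakeeq]
    have hval := hvalley (i : ℕ) hiLe
    have hsdiff : R \ (ss.take (i : ℕ)).toFinset = (ss.drop (i : ℕ)).toFinset := by
      rw [← hssR, dropLem ss hnd2]
    rw [hsdiff, Finset.empty_union] at hval
    rw [Finset.union_comm]
    exact hval
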